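/- Let n ≥ 1 and p₁,…,pₙ ∈ (0,1]. Set D = 1 + ∑_{i=1}^{n−1} ∏_{j=1}^{i} p_j. The row vector π indexed by {0,1,…,n} with π₀ = (1 − ∏_{i=1}^{n} p_i)/D and π_i = (∏_{j=1}^{i} p_j)/D for 1 ≤ i ≤ n is a stationary distribution of Pₙ: all entries are nonnegative, they sum to 1, and π·Pₙ = π. Moreover it is the unique such vector. In particular the equilibrium probability of the overall-success state n is π_n = (∏_{i=1}^{n} p_i)/(1 + ∑_{i=1}^{n−1} ∏_{j=1}^{i} p_j). -/

import Mathlib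

open Matrix

/-- Transition matrix of the `n`-round multiheralded entanglement generation Markov
chain on states `{0,1,…,n}` (state `0` is failure, state `i ≥ 1` means round `i`
succeeded, state `n` is overall success); `p i` is the success probability of
round `i` for `1 ≤ i ≤ n`. -/
def multiHeraldedP (n : ℕ) (p : ℕ → ℝ) : Matrix (Fin (n + 1)) (Fin (n + 1)) ℝ :=
  fun i j =>
    if (i : ℕ) < n then
      if (j : ℕ) = 0 then 1 - p ((i : ℕ) + 1)
      else if (j : ℕ) = (i : ℕ) + 1 then p ((i : ℕ) + 1)
      else 0
    else
      if (j : ℕ) = 0 then 1 - p 1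
      else if (j : ℕ) = 1 then p 1
      else 0

lemma mh_col_succ (m : ℕ) (p : ℕ → ℝ) (v : Fin (m + 2) → ℝ) (t : Fin (m + 1)) :
    (v ᵥ* multiHeraldedP (m + 1) p) t.succ
      = v t.castSucc * p ((t : ℕ) + 1)
        + (if (t : ℕ) = 0 then v (Fin.last (m + 1)) * p 1 else 0) := by
  classical
  have hsum : (v ᵥ* multiHeraldedP (m + 1) p) t.succ
      = ∑ i : Fin (m + 2), v i * multiHeraldedP (m + 1) p i t.succ := by
    simp [Matrix.vecMul, dotProduct]
  rw [hsum]
  have hcast : ((t.castSucc : Fin (m+2)) : ℕ) = (t : ℕ) := rfl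
  have hsuccval : ((t.succ : Fin (m+2)) : ℕ) = (t : ℕ) + 1 := rfl
  by_cases ht : (t : ℕ) = 0
  · rw [if_pos ht]
    have hne : (t.castSucc : Fin (m+2)) ≠ Fin.last (m+1) := by
      simp [Fin.ext_iff, hcast, ht]
    rw [Finset.sum_eq_add_of_mem t.castSucc (Fin.last (m+1))
      (Finset.mem_univ _) (Finset.mem_univ _) hne ?_]
    · have h1 : multiHeraldedP (m+1) p t.castSucc t.succ = p ((t:ℕ)+1) := by
        simp [multiHeraldedP, hcast, hsuccval, t.castSucc.is_lt, ht]
      have h2 : multiHeraldedP (m+1) p (Fin.last (m+1)) t.succ = p 1 := by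
        simp [multiHeraldedP, hsuccval, ht]
      rw [h1, h2]
    · intro c _ ⟨hc1, hc2⟩
      have hclt : (c : ℕ) < m + 1 := by
        rcases lt_or_eq_of_le (Nat.lt_succ_iff.mp c.is_lt) with h | h
        · exact h
        · exact absurd (Fin.ext h : c = Fin.last (m+1)) hc2
      have hcne : (c : ℕ) ≠ (t : ℕ) := fun h => hc1 (Fin.ext h)
      have : multiHeraldedP (m+1) p c t.succ = 0 := by
        simp only [multiHeraldedP, if_pos hclt, hsuccval]
        rw [if_neg (by omega), if_neg (by omega)]
      simp [this]
  · rw [if_neg ht]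
    rw [Finset.sum_eq_single_of_mem t.castSucc (Finset.mem_univ _) ?_]
    · have h1 : multiHeraldedP (m+1) p t.castSucc t.succ = p ((t:ℕ)+1) := by
        simp [multiHeraldedP, hcast, hsuccval, t.castSucc.is_lt]
        intro h; exact absurd h (by have := t.is_lt; omega)
      rw [h1]; ring
    · intro c _ hc1
      have hcne : (c : ℕ) ≠ (t : ℕ) := fun h => hc1 (Fin.ext h)
      have : multiHeraldedP (m+1) p c t.succ = 0 := by
        by_cases hclt : (c : ℕ) < m + 1
        · simp only [multiHeraldedP, if_pos hclt, hsuccval]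
          rw [if_neg (by omega), if_neg (by omega)]
        · simp only [multiHeraldedP, if_neg hclt, hsuccval]
          rw [if_neg (by omega), if_neg (by omega)]
      simp [this]

lemma mh_row_sum (m : ℕ) (p : ℕ → ℝ) (i : Fin (m + 2)) :
    ∑ j, multiHeraldedP (m + 1) p i j = 1 := by
  classical
  by_cases hi : (i : ℕ) < m + 1
  · have hne : (0 : Fin (m+2)) ≠ (⟨(i:ℕ)+1, by omega⟩ : Fin (m+2)) := by
      intro h; have := congrArg Fin.val h; simp only [Fin.val_zero] at this; omega
    rw [Finset.sum_eq_add_of_mem (0 : Fin (m+2)) (⟨(i:ℕ)+1, by omega⟩ : Fin (m+2))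
      (Finset.mem_univ _) (Finset.mem_univ _) hne ?_]
    · have h1 : multiHeraldedP (m+1) p i 0 = 1 - p ((i:ℕ)+1) := by
        simp [multiHeraldedP, hi]
      have h2 : multiHeraldedP (m+1) p i ⟨(i:ℕ)+1, by omega⟩ = p ((i:ℕ)+1) := by
        simp [multiHeraldedP, hi]
      rw [h1, h2]; ring
    · intro c _ ⟨hc1, hc2⟩
      have h1 : (c : ℕ) ≠ 0 := fun h => hc1 (Fin.ext h)
      have h2 : (c : ℕ) ≠ (i:ℕ)+1 := fun h => hc2 (Fin.ext h)
      simp only [multiHeraldedP, if_pos hi]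
      rw [if_neg h1, if_neg h2]
  · have hne : (0 : Fin (m+2)) ≠ (⟨1, by omega⟩ : Fin (m+2)) := by
      simp [Fin.ext_iff]
    rw [Finset.sum_eq_add_of_mem (0 : Fin (m+2)) (⟨1, by omega⟩ : Fin (m+2))
      (Finset.mem_univ _) (Finset.mem_univ _) hne ?_]
    · have h1 : multiHeraldedP (m+1) p i 0 = 1 - p 1 := by
        simp [multiHeraldedP, hi]
      have h2 : multiHeraldedP (m+1) p i ⟨1, by omega⟩ = p 1 := by
        simp [multiHeraldedP, hi]
      rw [h1, h2]; ring
    · intro c _ ⟨hc1, hc2⟩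
      have h1 : (c : ℕ) ≠ 0 := fun h => hc1 (Fin.ext h)
      have h2 : (c : ℕ) ≠ 1 := fun h => hc2 (Fin.ext h)
      simp only [multiHeraldedP, if_neg hi]
      rw [if_neg h1, if_neg h2]

lemma sum_Icc_one_eq_sum_range (f : ℕ → ℝ) (k : ℕ) :
    ∑ i ∈ Finset.Icc 1 k, f i = ∑ i ∈ Finset.range k, f (i + 1) := by
  induction k with
  | zero => simp
  | succ k ih => rw [Finset.sum_Icc_succ_top (by omega), Finset.sum_range_succ, ih]


/-- Unique stationary distribution of `n`-round multiheralded entanglement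
generation: with `D = 1 + ∑_{i=1}^{n−1} ∏_{j=1}^{i} p_j`, the vector given by
`π₀ = (1 − ∏_{i=1}^{n} p_i)/D` and `π_i = (∏_{j=1}^{i} p_j)/D` for `1 ≤ i ≤ n`
is stationary, is the unique stationary distribution, and in particular the
equilibrium probability of the overall-success state `n` is
`(∏_{i=1}^{n} p_i)/(1 + ∑_{i=1}^{n−1} ∏_{j=1}^{i} p_j)`. -/
theorem multiheralded_stationary_distribution (n : ℕ) (hn : 1 ≤ n) (p : ℕ → ℝ)
    (hp : ∀ i ∈ Finset.Icc 1 n, 0 < p i ∧ p i ≤ 1) :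
    let D : ℝ := 1 + ∑ i ∈ Finset.Icc 1 (n - 1), ∏ j ∈ Finset.Icc 1 i, p j
    let π : Fin (n + 1) → ℝ := fun i =>
      if (i : ℕ) = 0 then (1 - ∏ i ∈ Finset.Icc 1 n, p i) / D
      else (∏ j ∈ Finset.Icc 1 (i : ℕ), p j) / D
    (∀ s, 0 ≤ π s) ∧ (∑ s, π s = 1) ∧ π ᵥ* multiHeraldedP n p = π ∧
      (∀ π' : Fin (n + 1) → ℝ, (∀ s, 0 ≤ π' s) → (∑ s, π' s = 1) →
        π' ᵥ* multiHeraldedP n p = π' → π' = π) ∧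
      π (Fin.last n)
        = (∏ i ∈ Finset.Icc 1 n, p i)
            / (1 + ∑ i ∈ Finset.Icc 1 (n - 1), ∏ j ∈ Finset.Icc 1 i, p j) := by
  obtain ⟨m, rfl⟩ : ∃ m, n = m + 1 := ⟨n - 1, (Nat.succ_pred_eq_of_pos hn).symm⟩
  intro D π
  set Q : ℕ → ℝ := fun i => ∏ j ∈ Finset.Icc 1 i, p j with hQdef
  -- basic facts about Q
  have hQsucc : ∀ i, Q (i + 1) = Q i * p (i + 1) := by
    intro i
    exact Finset.prod_Icc_succ_top (by omega) p
  have hQpos : ∀ i, i ≤ m + 1 → 0 < Q i := by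
    intro i hi
    refine Finset.prod_pos fun j hj => ?_
    exact (hp j (Finset.mem_Icc.mpr ⟨(Finset.mem_Icc.mp hj).1, le_trans (Finset.mem_Icc.mp hj).2 hi⟩)).1
  have hQle : ∀ i, i ≤ m + 1 → Q i ≤ 1 := by
    intro i hi
    refine Finset.prod_le_one (fun j hj => ?_) (fun j hj => ?_)
    · exact le_of_lt (hp j (Finset.mem_Icc.mpr ⟨(Finset.mem_Icc.mp hj).1, le_trans (Finset.mem_Icc.mp hj).2 hi⟩)).1
    · exact (hp j (Finset.mem_Icc.mpr ⟨(Finset.mem_Icc.mp hj).1, le_trans (Finset.mem_Icc.mp hj).2 hi⟩)).2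
  have hD : D = 1 + ∑ i ∈ Finset.Icc 1 m, Q i := by simp [D, hQdef]
  have hDpos : 0 < D := by
    rw [hD]
    have : 0 ≤ ∑ i ∈ Finset.Icc 1 m, Q i :=
      Finset.sum_nonneg fun i hi =>
        le_of_lt (hQpos i (by have := Finset.mem_Icc.mp hi; omega))
    linarith
  have hDne : D ≠ 0 := ne_of_gt hDpos
  -- values of π
  have hπ0 : π 0 = (1 - Q (m + 1)) / D := by simp [π, hQdef]
  have hπsucc : ∀ t : Fin (m + 1), π t.succ = Q ((t : ℕ) + 1) / D := by
    intro t; simp [π, hQdef]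
  have hπlast : π (Fin.last (m + 1)) = Q (m + 1) / D := by
    simp [π, hQdef]
  -- key sum identity
  have hkey : ∑ t : Fin (m + 1), Q ((t : ℕ) + 1) = (D - 1) + Q (m + 1) := by
    have h1 : ∑ t : Fin (m + 1), Q ((t : ℕ) + 1)
        = ∑ i ∈ Finset.range (m + 1), Q (i + 1) :=
      Fin.sum_univ_eq_sum_range (fun i => Q (i + 1)) (m + 1)
    have h2 : ∑ i ∈ Finset.range (m + 1), Q (i + 1)
        = ∑ i ∈ Finset.range m, Q (i + 1) + Q (m + 1) := Finset.sum_range_succ _ m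
    have h3 : ∑ i ∈ Finset.Icc 1 m, Q i = ∑ i ∈ Finset.range m, Q (i + 1) :=
      sum_Icc_one_eq_sum_range Q m
    rw [h1, h2, ← h3, hD]; ring
  -- total sum is 1
  have hsum : ∑ s, π s = 1 := by
    rw [Fin.sum_univ_succ, hπ0]
    have : ∑ t : Fin (m + 1), π t.succ = ((D - 1) + Q (m + 1)) / D := by
      have e1 : ∑ t : Fin (m + 1), π t.succ = ∑ t : Fin (m + 1), Q ((t : ℕ) + 1) / D :=
        Finset.sum_congr rfl fun t _ => hπsucc t
      rw [e1, ← Finset.sum_div, hkey]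
    rw [this]
    field_simp
    ring
  -- stationarity on successor columns
  have hsucc : ∀ t : Fin (m + 1), (π ᵥ* multiHeraldedP (m + 1) p) t.succ = π t.succ := by
    intro t
    rw [mh_col_succ, hπsucc]
    by_cases ht : (t : ℕ) = 0
    · rw [if_pos ht]
      have hcs : t.castSucc = 0 := by
        ext; simpa using ht
      rw [hcs, hπ0, hπlast, ht]
      have hQ1 : Q 1 = p 1 := by simp [hQdef]
      rw [hQ1]
      field_simp
      ring
    · rw [if_neg ht]
      have hcs : π t.castSucc = Q (t : ℕ) / D := by
        simp [π, hQdef, ht]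
        intro h; exact absurd (by simp [h]) ht
      rw [hcs, hQsucc]
      ring
  -- stationarity
  have hstat : π ᵥ* multiHeraldedP (m + 1) p = π := by
    have htot : ∑ j, (π ᵥ* multiHeraldedP (m + 1) p) j = 1 := by
      calc ∑ j, (π ᵥ* multiHeraldedP (m + 1) p) j
          = ∑ j : Fin (m+2), ∑ i : Fin (m+2), π i * multiHeraldedP (m + 1) p i j := by
            simp [Matrix.vecMul, dotProduct]
        _ = ∑ i : Fin (m+2), ∑ j : Fin (m+2), π i * multiHeraldedP (m + 1) p i j :=
            Finset.sum_comm
        _ = ∑ i : Fin (m+2), π i * ∑ j, multiHeraldedP (m + 1) p i j := by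
            simp [Finset.mul_sum]
        _ = ∑ i, π i := by
            simp [mh_row_sum]
        _ = 1 := hsum
    funext j
    refine Fin.cases ?_ (fun t => hsucc t) j
    · have h1 := htot
      rw [Fin.sum_univ_succ] at h1
      have h2 := hsum
      rw [Fin.sum_univ_succ] at h2
      have h3 : ∑ t : Fin (m+1), (π ᵥ* multiHeraldedP (m + 1) p) t.succ
          = ∑ t : Fin (m+1), π t.succ :=
        Finset.sum_congr rfl fun t _ => hsucc t
      linarith
  -- uniqueness
  have huniq : ∀ π' : Fin (m + 1 + 1) → ℝ, (∀ s, 0 ≤ π' s) → (∑ s, π' s = 1) →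
      π' ᵥ* multiHeraldedP (m + 1) p = π' → π' = π := by
    intro π' _ hsum' hstat'
    set c : ℝ := π' 0 + π' (Fin.last (m + 1)) with hc
    have hrec : ∀ t : Fin (m + 1), π' t.succ
        = π' t.castSucc * p ((t : ℕ) + 1)
          + (if (t : ℕ) = 0 then π' (Fin.last (m + 1)) * p 1 else 0) := by
      intro t
      rw [← mh_col_succ, hstat']
    have hclaim : ∀ t : Fin (m + 1), π' t.succ = c * Q ((t : ℕ) + 1) := by
      intro t
      induction t using Fin.induction with
      | zero =>
        have h := hrec 0
        have hQ1 : Q 1 = p 1 := by simp [hQdef]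
        norm_num at h ⊢
        rw [h, hQ1, hc]; ring
      | succ t ih =>
        have h := hrec t.succ
        have hv : ((t.succ : Fin (m + 1)) : ℕ) = (t : ℕ) + 1 := rfl
        rw [hv, if_neg (Nat.succ_ne_zero _)] at h
        have hcs : (t.succ).castSucc = (t.castSucc).succ := (Fin.succ_castSucc t).symm
        rw [hcs] at h
        have hcv : ((t.castSucc : Fin (m + 1)) : ℕ) = (t : ℕ) := rfl
        rw [hcv] at ih
        rw [h, ih]
        rw [show ((t.succ : Fin (m + 1)) : ℕ) = (t : ℕ) + 1 from rfl, hQsucc ((t : ℕ) + 1)]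
        ring
    have hlast' : π' (Fin.last (m + 1)) = c * Q (m + 1) := by
      have := hclaim (Fin.last m)
      rwa [Fin.succ_last, Fin.val_last] at this
    have h0' : π' 0 = c * (1 - Q (m + 1)) := by
      rw [hc] at hlast' ⊢
      nlinarith [hlast']
    have hcD : c * D = 1 := by
      have h1 := hsum'
      rw [Fin.sum_univ_succ] at h1
      have h2 : ∑ t : Fin (m + 1), π' t.succ = c * ((D - 1) + Q (m + 1)) := by
        rw [← hkey, Finset.mul_sum]
        exact Finset.sum_congr rfl fun t _ => hclaim t
      rw [h0', h2] at h1
      linarith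
    have hcval : c = 1 / D := by
      field_simp
      linarith [hcD]
    funext s
    refine Fin.cases ?_ (fun t => ?_) s
    · rw [h0', hπ0, hcval]; ring
    · rw [hclaim t, hπsucc t, hcval]; ring
  refine ⟨?_, hsum, hstat, huniq, ?_⟩
  · intro s
    refine Fin.cases ?_ (fun t => ?_) s
    · rw [hπ0]
      have := hQle (m + 1) le_rfl
      exact div_nonneg (by linarith) (le_of_lt hDpos)
    · rw [hπsucc]
      have := hQpos ((t : ℕ) + 1) (by omega)
      positivity
  · rw [hπlast, hD]
    simp [hQdef]
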